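/- Let g ∈ S_n be a permutation with cycle type λ = (λ_1,...,λ_s) (including fixed points as cycles of length 1). Then g can be written as a product of exactly Σ_k (λ_k − 1) + 2(s−1) = n + s − 2 transpositions which together generate all of S_n. -/

import Mathlib

open Equiv Equiv.Perm Subgroup

section Aux

variable {α : Type*} [Fintype α] [DecidableEq α]

private lemma swap_mem_closure_symm {S : Set (Equiv.Perm α)} {a b : α}
    (h : Equiv.swap a b ∈ Subgroup.closure S) : Equiv.swap b a ∈ Subgroup.closure S := by
  rwa [Equiv.swap_comm]

/-- A cycle with support of size `m` factors into `m-1` swaps whose closure links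
all points of the support. -/
private lemma cycle_swap_list :
    ∀ (m : ℕ) (c : Equiv.Perm α), c.support.card = m → c.IsCycle →
    ∃ l : List (Equiv.Perm α), (∀ x ∈ l, x.IsSwap) ∧ l.prod = c ∧
      l.length + 1 = c.support.card ∧
      ∀ a ∈ c.support, ∀ b ∈ c.support, Equiv.swap a b ∈ Subgroup.closure {x | x ∈ l} := by
  intro m
  induction m using Nat.strong_induction_on with
  | _ m ih =>
  intro c hm hc
  obtain ⟨x, hx, -⟩ := id hc
  by_cases h2 : c (c x) = x
  · have hxc : x ≠ c x := fun h => hx h.symm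
    have hsupp : c.support = {x, c x} := by
      conv_lhs => rw [hc.eq_swap_of_apply_apply_eq_self hx h2]
      exact Equiv.Perm.support_swap hxc
    refine ⟨[c], ?_, ?_, ?_, ?_⟩
    · intro y hy
      simp only [List.mem_singleton] at hy
      exact hy ▸ ⟨x, c x, hxc, hc.eq_swap_of_apply_apply_eq_self hx h2⟩
    · simp
    · rw [hsupp, Finset.card_insert_of_notMem (by simpa using hxc), Finset.card_singleton]
      rfl
    · intro a ha b hb
      rw [hsupp] at ha hb
      simp only [Finset.mem_insert, Finset.mem_singleton] at ha hb
      have hcmem : c ∈ Subgroup.closure {y | y ∈ [c]} :=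
        Subgroup.subset_closure (by simp)
      have hcswap : Equiv.swap x (c x) ∈ Subgroup.closure {y | y ∈ [c]} :=
        (hc.eq_swap_of_apply_apply_eq_self hx h2) ▸ hcmem
      rcases ha with rfl | rfl <;> rcases hb with rfl | rfl
      · rw [Equiv.swap_self]; exact Subgroup.one_mem _
      · exact hcswap
      · exact swap_mem_closure_symm hcswap
      · rw [Equiv.swap_self]; exact Subgroup.one_mem _
  · have hc' : (Equiv.swap x (c x) * c).IsCycle := hc.swap_mul hx h2
    have hsupp : (Equiv.swap x (c x) * c).support = c.support \ {x} :=
      Equiv.Perm.support_swap_mul_eq c x h2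
    have hxmem : x ∈ c.support := Equiv.Perm.mem_support.mpr hx
    have hcard : (Equiv.swap x (c x) * c).support.card = m - 1 := by
      rw [hsupp, Finset.card_sdiff_of_subset (by simpa using hxmem), hm, Finset.card_singleton]
    have hm1 : 1 ≤ m := by
      rw [← hm]; exact Finset.card_pos.mpr ⟨x, hxmem⟩
    have hlt : m - 1 < m := Nat.sub_lt hm1 one_pos
    obtain ⟨l, hsw, hprod, hlen, hconn⟩ := ih (m - 1) hlt _ hcard hc'
    have hxcne : x ≠ c x := fun h => hx h.symm
    refine ⟨Equiv.swap x (c x) :: l, ?_, ?_, ?_, ?_⟩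
    · rintro y hy
      rcases List.mem_cons.mp hy with rfl | hy
      · exact ⟨x, c x, hxcne, rfl⟩
      · exact hsw y hy
    · rw [List.prod_cons, hprod, ← mul_assoc, Equiv.swap_mul_self, one_mul]
    · rw [List.length_cons, hm]
      rw [hcard] at hlen
      omega
    · intro a ha b hb
      set S : Set (Equiv.Perm α) := {y | y ∈ Equiv.swap x (c x) :: l} with hS
      have hmono : Subgroup.closure {y | y ∈ l} ≤ Subgroup.closure S :=
        Subgroup.closure_mono (fun y hy => List.mem_cons_of_mem _ hy)
      have htS : Equiv.swap x (c x) ∈ Subgroup.closure S :=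
        Subgroup.subset_closure List.mem_cons_self
      have hcxmem : c x ∈ (Equiv.swap x (c x) * c).support := by
        rw [hsupp]
        simp only [Finset.mem_sdiff, Finset.mem_singleton]
        exact ⟨Equiv.Perm.apply_mem_support.mpr hxmem, fun h => hx h⟩
      have key : ∀ a ∈ c.support, Equiv.swap x a ∈ Subgroup.closure S := by
        intro a ha
        by_cases hax : a = x
        · subst hax; rw [Equiv.swap_self]; exact Subgroup.one_mem _
        · have ha' : a ∈ (Equiv.swap x (c x) * c).support := by
            rw [hsupp]; simp [ha, hax]
          have h1 : Equiv.swap (c x) a ∈ Subgroup.closure S :=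
            hmono (hconn _ hcxmem _ ha')
          exact SubmonoidClass.swap_mem_trans _ htS h1
      exact SubmonoidClass.swap_mem_trans _ (swap_mem_closure_symm (key a ha)) (key b hb)

private lemma sum_map_lemma {β : Type*} (l : List β) (u v : β → ℕ)
    (h : ∀ x ∈ l, u x + 1 = v x) :
    (l.map u).sum + l.length = (l.map v).sum := by
  induction l with
  | nil => simp
  | cons a t ih =>
      simp only [List.map_cons, List.sum_cons, List.length_cons]
      have h1 := h a (by simp)
      have ht := ih (fun x hx => h x (List.mem_cons_of_mem _ hx))
      omega

private lemma sum_map_two {β γ : Type*} (l : List β) (f : β → γ) :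
    (l.map (List.length ∘ fun x => [f x, f x])).sum = 2 * l.length := by
  induction l with
  | nil => simp
  | cons a t ih =>
      simp only [List.map_cons, List.sum_cons, List.length_cons, ih, Function.comp]
      simp only [List.length_cons, List.length_nil]
      omega

end Aux

/-- The number of cycles of a permutation, counting fixed points as 1-cycles. -/
def numCycles {n : ℕ} (g : Equiv.Perm (Fin n)) : ℕ :=
  n - g.cycleType.sum + Multiset.card g.cycleType

/-- A permutation `g ∈ S_n` with `s` cycles (including fixed points) can be written as
a product of exactly `n + s - 2` transpositions which together generate all of `S_n`. -/
theorem factorization_generating_of_length_n_add_s_sub_two (n : ℕ) (hn : 2 ≤ n)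
    (g : Equiv.Perm (Fin n)) (s : ℕ) (hs : s = numCycles g) :
    ∃ l : List (Equiv.Perm (Fin n)),
      (∀ x ∈ l, x.IsSwap) ∧ l.prod = g ∧
      Subgroup.closure {x | x ∈ l} = ⊤ ∧ l.length = n + s - 2 := by
  classical
  -- the list of cycle factors
  obtain ⟨cl, hnd, hfs⟩ := g.cycleFactorsFinset.exists_list_nodup_eq
  have hmemcl : ∀ c, c ∈ cl ↔ c ∈ g.cycleFactorsFinset := by
    intro c; rw [← hfs, List.mem_toFinset]
  have hcyc : ∀ c ∈ cl, c.IsCycle := fun c hc =>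
    (Equiv.Perm.mem_cycleFactorsFinset_iff.mp ((hmemcl c).mp hc)).1
  -- product of cl is g
  have hclprod : cl.prod = g := by
    have h1 : cl.toFinset.noncommProd id
        (by rw [hfs]; exact g.cycleFactorsFinset_mem_commute) = g := by
      rw [Finset.noncommProd_congr hfs (fun x _ => rfl)]
      exact g.cycleFactorsFinset_noncommProd _
    rwa [Finset.noncommProd_toFinset _ _ _ hnd, List.map_id] at h1
  have hNE : Nonempty (Fin n) := ⟨⟨0, by omega⟩⟩
  -- cycle type as a list
  have hct : g.cycleType = ((cl.map fun c => c.support.card : List ℕ) : Multiset ℕ) := by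
    rw [Equiv.Perm.cycleType_def, ← hfs]
    have hval : (cl.toFinset).val = (cl : Multiset (Equiv.Perm (Fin n))) := by
      rw [List.toFinset_val, List.dedup_eq_self.mpr hnd]
    rw [hval]
    simp [Function.comp]
  have hK : Multiset.card g.cycleType = cl.length := by rw [hct]; simp
  have hSM : g.cycleType.sum = g.support.card := Equiv.Perm.sum_cycleType g
  have hsum : (cl.map fun c => c.support.card).sum = g.support.card := by
    rw [← hSM, hct]; simp
  have hsupple : g.support.card ≤ n := by
    simpa using Finset.card_le_univ g.support
  -- choose swap factorizations of the cycles
  have hfex : ∀ c ∈ cl, ∃ l : List (Equiv.Perm (Fin n)),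
      (∀ x ∈ l, x.IsSwap) ∧ l.prod = c ∧ l.length + 1 = c.support.card ∧
      ∀ a ∈ c.support, ∀ b ∈ c.support, Equiv.swap a b ∈ Subgroup.closure {x | x ∈ l} :=
    fun c hc => cycle_swap_list c.support.card c rfl (hcyc c hc)
  choose! f hf1 hf2 hf3 hf4 using hfex
  -- choose representatives of the cycles
  have hrex : ∀ c ∈ cl, ∃ r, r ∈ c.support := fun c hc => (hcyc c hc).nonempty_support
  choose! rep hrep using hrex
  set F : List (Fin n) := g.supportᶜ.toList with hF
  set reps : List (Fin n) := cl.map rep ++ F with hreps0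
  -- reps is nodup
  have hrepsupp : ∀ c ∈ cl, rep c ∈ g.support := fun c hc =>
    Equiv.Perm.mem_cycleFactorsFinset_support_le ((hmemcl c).mp hc) (hrep c hc)
  have hndreps : reps.Nodup := by
    refine List.Nodup.append ?_ (Finset.nodup_toList _) ?_
    · refine List.Nodup.map_on ?_ hnd
      intro c hc c' hc' hcc'
      by_contra hne
      have hd : Equiv.Perm.Disjoint c c' :=
        g.cycleFactorsFinset_pairwise_disjoint ((hmemcl c).mp hc) ((hmemcl c').mp hc') hne
      have := Finset.disjoint_left.mp hd.disjoint_support (hrep c hc)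
      rw [hcc'] at this
      exact this (hrep c' hc')
    · intro a ha haF
      obtain ⟨c, hc, rfl⟩ := List.mem_map.mp ha
      have : rep c ∈ g.supportᶜ := Finset.mem_toList.mp haF
      exact (Finset.mem_compl.mp this) (hrepsupp c hc)
  -- reps is nonempty
  have hFlen : F.length = n - g.support.card := by
    rw [hF, Finset.length_toList, Finset.card_compl, Fintype.card_fin]
  have hrepslen : reps.length = cl.length + (n - g.support.card) := by
    rw [hreps0, List.length_append, List.length_map, hFlen]
  have hne : reps ≠ [] := by
    intro h
    have h0 : reps.length = 0 := by rw [h]; rfl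
    rw [hrepslen] at h0
    have hcl0 : cl.length = 0 := by omega
    have : cl = [] := List.length_eq_zero_iff.mp hcl0
    rw [this] at hclprod
    simp only [List.prod_nil] at hclprod
    have : g.support.card = 0 := by rw [← hclprod]; simp
    omega
  obtain ⟨r0, rest, hrc⟩ := List.exists_cons_of_ne_nil hne
  -- the full list
  set lC : List (Equiv.Perm (Fin n)) := (cl.map f).flatten with hlC
  set lL : List (List (Equiv.Perm (Fin n))) :=
    rest.map (fun r => [Equiv.swap r0 r, Equiv.swap r0 r]) with hlL
  set lFull : List (Equiv.Perm (Fin n)) := lC ++ lL.flatten with hlFull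
  have hr0rest : r0 ∉ rest := by
    have := hndreps
    rw [hrc] at this
    exact (List.nodup_cons.mp this).1
  -- membership helpers
  have hsubC : ∀ c ∈ cl, ∀ x ∈ f c, x ∈ lFull := by
    intro c hc x hx
    exact List.mem_append_left _ (List.mem_flatten.mpr ⟨f c, List.mem_map_of_mem (f := f) hc, hx⟩)
  have hsubL : ∀ r ∈ rest, Equiv.swap r0 r ∈ lFull := by
    intro r hr
    refine List.mem_append_right _ (List.mem_flatten.mpr ⟨[Equiv.swap r0 r, Equiv.swap r0 r],
      List.mem_map_of_mem hr, by simp⟩)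
  refine ⟨lFull, ?_, ?_, ?_, ?_⟩
  · -- all swaps
    intro x hx
    rcases List.mem_append.mp hx with hx | hx
    · obtain ⟨l', hl', hxl'⟩ := List.mem_flatten.mp hx
      obtain ⟨c, hc, rfl⟩ := List.mem_map.mp hl'
      exact hf1 c hc x hxl'
    · obtain ⟨l', hl', hxl'⟩ := List.mem_flatten.mp hx
      obtain ⟨r, hr, rfl⟩ := List.mem_map.mp hl'
      have hne' : r0 ≠ r := fun h => hr0rest (h ▸ hr)
      have hx' : x = Equiv.swap r0 r := by
        rcases List.mem_cons.mp hxl' with rfl | h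
        · rfl
        · simpa using h
      exact ⟨r0, r, hne', hx'⟩
  · -- product
    rw [hlFull, List.prod_append]
    have h1 : lC.prod = g := by
      rw [hlC, List.prod_flatten, List.map_map]
      have he : cl.map (List.prod ∘ f) = cl.map id :=
        List.map_congr_left (fun c hc => hf2 c hc)
      rw [he, List.map_id, hclprod]
    have h2 : lL.flatten.prod = 1 := by
      rw [List.prod_flatten]
      apply List.prod_eq_one
      intro x hx
      rw [hlL, List.map_map] at hx
      obtain ⟨r, hr, rfl⟩ := List.mem_map.mp hx
      simp
    rw [h1, h2, mul_one]
  · -- generation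
    set S : Set (Equiv.Perm (Fin n)) := {x | x ∈ lFull} with hSdef
    have claimA : ∀ r ∈ reps, Equiv.swap r0 r ∈ Subgroup.closure S := by
      intro r hr
      rw [hrc] at hr
      rcases List.mem_cons.mp hr with rfl | hr
      · rw [Equiv.swap_self]
        exact Subgroup.one_mem _
      · exact Subgroup.subset_closure (hsubL r hr)
    have claimB : ∀ a : Fin n, ∃ r ∈ reps, Equiv.swap r a ∈ Subgroup.closure S := by
      intro a
      by_cases hga : g a = a
      · refine ⟨a, ?_, by rw [Equiv.swap_self]; exact Subgroup.one_mem _⟩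
        refine List.mem_append_right _ ?_
        rw [hF, Finset.mem_toList, Finset.mem_compl]
        exact Equiv.Perm.notMem_support.mpr hga
      · have hamem : a ∈ g.support := Equiv.Perm.mem_support.mpr hga
        have hcmem : g.cycleOf a ∈ cl :=
          (hmemcl _).mpr (Equiv.Perm.cycleOf_mem_cycleFactorsFinset_iff.mpr hamem)
        refine ⟨rep (g.cycleOf a),
          List.mem_append_left _ (List.mem_map_of_mem (f := rep) hcmem), ?_⟩
        have ha : a ∈ (g.cycleOf a).support :=
          Equiv.Perm.mem_support_cycleOf_iff.mpr ⟨Equiv.Perm.SameCycle.refl g a, hamem⟩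
        have hcl := hf4 _ hcmem (rep (g.cycleOf a)) (hrep _ hcmem) a ha
        exact Subgroup.closure_mono (fun x hx => hsubC _ hcmem x hx) hcl
    rw [eq_top_iff, ← Equiv.Perm.closure_isSwap]
    apply (Subgroup.closure_le _).mpr
    rintro σ ⟨a, b, hab, rfl⟩
    obtain ⟨ra, hra, h1⟩ := claimB a
    obtain ⟨rb, hrb, h2⟩ := claimB b
    have t1 : Equiv.swap a r0 ∈ Subgroup.closure S :=
      SubmonoidClass.swap_mem_trans _ (swap_mem_closure_symm h1)
        (swap_mem_closure_symm (claimA ra hra))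
    have t2 : Equiv.swap a rb ∈ Subgroup.closure S :=
      SubmonoidClass.swap_mem_trans _ t1 (claimA rb hrb)
    exact SubmonoidClass.swap_mem_trans _ t2 h2
  · -- length
    have hLC : lC.length + cl.length = g.support.card := by
      rw [hlC, List.length_flatten, List.map_map, ← hsum]
      exact sum_map_lemma cl _ _ (fun c hc => hf3 c hc)
    have hLL : lL.flatten.length = 2 * rest.length := by
      rw [hlL, List.length_flatten, List.map_map]
      exact sum_map_two rest _
    have hlen : lFull.length = lC.length + lL.flatten.length := by
      rw [hlFull, List.length_append]
    have hrestlen : rest.length + 1 = reps.length := by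
      rw [hrc, List.length_cons]
    rw [numCycles, hSM, hK] at hs
    omega
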